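/- Let (b, d, ρ, ν) be a compact pointed metric space with a Borel probability measure, let d > 0, r_0 ∈ (0,1), and let φ: [0,1] → [0, d/2] be increasing with φ(r) → 0 as r → 0, such that for all r ∈ [0, r_0) and all x ∈ b, r^{d+φ(r)} ≤ ν(B(x,r)) ≤ r^{d-φ(r)}. Let r ∈ (0, r_0/3) and let (f_i)_{1≤i≤n} be a partition of b such that B(x_i, r/4) ⊆ f_i ⊆ B(x_i, r) for points x_1, …, x_n ∈ b. Then there exist functions ψ, φ' on [0, r_0/3] tending to 0 at 0 (depending only on φ and d) such that for all x ∈ b and all r' ∈ (0, r_0/3), the number of indices i with B(x, r') ∩ f_i ≠ ∅ is at most (r ∨ r')^{d + ψ(r ∨ r')} · r^{-d + φ'(r)}. -/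

import Mathlib

open Filter
open scoped Classical

theorem stmt_16 {X : Type*} [MetricSpace X] [CompactSpace X]
    [MeasurableSpace X] [BorelSpace X]
    (d r₀ : ℝ) (hd : 0 < d) (hr₀ : r₀ ∈ Set.Ioo (0 : ℝ) 1)
    (φ : ℝ → ℝ) (hφmono : MonotoneOn φ (Set.Icc 0 1))
    (hφrange : ∀ t ∈ Set.Icc (0 : ℝ) 1, φ t ∈ Set.Icc 0 (d / 2))
    (hφ0 : Tendsto φ (nhdsWithin 0 (Set.Ioi 0)) (nhds 0)) :
    ∃ ψ φ' : ℝ → ℝ,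
      Tendsto ψ (nhdsWithin 0 (Set.Ioi 0)) (nhds 0) ∧
      Tendsto φ' (nhdsWithin 0 (Set.Ioi 0)) (nhds 0) ∧
      ∀ (ν : MeasureTheory.Measure X), MeasureTheory.IsProbabilityMeasure ν →
        (∀ r : ℝ, 0 ≤ r → r < r₀ → ∀ x : X,
          r ^ (d + φ r) ≤ (ν (Metric.ball x r)).toReal ∧
          (ν (Metric.ball x r)).toReal ≤ r ^ (d - φ r)) →
        ∀ r ∈ Set.Ioo (0 : ℝ) (r₀ / 3), ∀ (n : ℕ) (c : Fin n → X) (f : Fin n → Set X),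
          (∀ i, Metric.ball (c i) (r / 4) ⊆ f i ∧ f i ⊆ Metric.ball (c i) r) →
          (∀ i j : Fin n, i ≠ j → Disjoint (f i) (f j)) →
          (⋃ i, f i) = Set.univ →
          ∀ (x : X), ∀ r' ∈ Set.Ioo (0 : ℝ) (r₀ / 3),
            ((Finset.univ.filter
                (fun i : Fin n => (Metric.ball x r' ∩ f i).Nonempty)).card : ℝ) ≤
              (max r r') ^ (d + ψ (max r r')) * r ^ (-d + φ' r) := by
  obtain ⟨hr₀0, hr₀1⟩ := hr₀
  set C : ℝ := 3 ^ d * 4 ^ (3 * d / 2) with hCdef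
  have hCpos : 0 < C := by positivity
  refine ⟨fun t => -(φ (3 * t)), fun t => -(φ t) + Real.log C / Real.log t, ?_, ?_, ?_⟩
  · have h3 : Tendsto (fun t : ℝ => 3 * t) (nhdsWithin 0 (Set.Ioi 0))
        (nhdsWithin 0 (Set.Ioi 0)) := by
      apply tendsto_nhdsWithin_of_tendsto_nhds_of_eventually_within
      · have : Tendsto (fun t : ℝ => 3 * t) (nhds 0) (nhds (3 * 0)) :=
          (continuous_const.mul continuous_id).tendsto 0
        simpa using this.mono_left nhdsWithin_le_nhds
      · filter_upwards [self_mem_nhdsWithin] with t ht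
        exact mul_pos (by norm_num : (0:ℝ) < 3) ht
    simpa using (hφ0.comp h3).neg
  · have h1 : Tendsto (fun t : ℝ => -(φ t)) (nhdsWithin 0 (Set.Ioi 0)) (nhds 0) := by
      simpa using hφ0.neg
    have h2 : Tendsto (fun t : ℝ => Real.log C / Real.log t)
        (nhdsWithin 0 (Set.Ioi 0)) (nhds 0) := by
      have hneg : Tendsto (fun t : ℝ => (-Real.log t)⁻¹)
          (nhdsWithin 0 (Set.Ioi 0)) (nhds 0) :=
        Filter.Tendsto.inv_tendsto_atTop
          (tendsto_neg_atBot_atTop.comp Real.tendsto_log_nhdsGT_zero)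
      have hinv : Tendsto (fun t : ℝ => (Real.log t)⁻¹)
          (nhdsWithin 0 (Set.Ioi 0)) (nhds 0) := by
        have := hneg.neg
        simp only [inv_neg, neg_neg, neg_zero] at this
        exact this
      simpa [div_eq_mul_inv] using hinv.const_mul (Real.log C)
    simpa using h1.add h2
  · intro ν hprob hball r hr n c f hf hdisj hcover x r' hr'
    haveI := hprob
    obtain ⟨hr0, hr1⟩ := hr
    obtain ⟨hr'0, hr'1⟩ := hr'
    set R : ℝ := max r r' with hRdef
    set s : ℝ := r' + 2 * r with hsdef
    have hR0 : 0 < R := lt_max_of_lt_left hr0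
    have hRr₀ : R < r₀ / 3 := max_lt hr1 hr'1
    have h3R1 : 3 * R < 1 := by linarith
    have hs0 : 0 < s := by positivity
    have hsr₀ : s < r₀ := by simp only [hsdef]; linarith
    have hs1 : s < 1 := lt_trans hsr₀ hr₀1
    have hs3R : s ≤ 3 * R := by
      have h1 : r ≤ R := le_max_left _ _
      have h2 : r' ≤ R := le_max_right _ _
      simp only [hsdef]; linarith
    -- memberships in Icc 0 1
    have hmr : r ∈ Set.Icc (0:ℝ) 1 := ⟨hr0.le, by linarith⟩
    have hmr4 : r / 4 ∈ Set.Icc (0:ℝ) 1 := ⟨by linarith, by linarith⟩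
    have hms : s ∈ Set.Icc (0:ℝ) 1 := ⟨hs0.le, hs1.le⟩
    have hm3R : 3 * R ∈ Set.Icc (0:ℝ) 1 := ⟨by linarith, h3R1.le⟩
    obtain ⟨hφr0, hφr1⟩ := hφrange r hmr
    obtain ⟨hφr40, hφr41⟩ := hφrange (r/4) hmr4
    obtain ⟨hφs0, hφs1⟩ := hφrange s hms
    obtain ⟨hφ3R0, hφ3R1⟩ := hφrange (3*R) hm3R
    have hφcmp1 : φ s ≤ φ (3 * R) := hφmono hms hm3R hs3R
    have hφcmp2 : φ (r/4) ≤ φ r := hφmono hmr4 hmr (by linarith)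
    set S := Finset.univ.filter (fun i : Fin n => (Metric.ball x r' ∩ f i).Nonempty) with hSdef
    -- key measure estimate
    have key : (S.card : ℝ) * (r/4) ^ (d + φ (r/4)) ≤ s ^ (d - φ s) := by
      have hsub : ∀ i ∈ S, Metric.ball (c i) (r/4) ⊆ Metric.ball x s := by
        intro i hi
        obtain ⟨y, hy1, hy2⟩ := (Finset.mem_filter.mp hi).2
        intro z hz
        have hzc : dist z (c i) < r/4 := hz
        have hyc : dist y (c i) < r := (hf i).2 hy2
        have hxy : dist x y < r' := by
          simpa [dist_comm] using hy1
        have : dist z x ≤ dist z (c i) + dist (c i) y + dist y x :=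
          dist_triangle4 z (c i) y x
        have : dist z x < r/4 + r + r' := by
          have h1 : dist (c i) y < r := by simpa [dist_comm] using hyc
          have h2 : dist y x < r' := by simpa [dist_comm] using hxy
          linarith
        have : dist z x < s := by simp only [hsdef]; linarith
        simpa [Metric.mem_ball] using this
      have hpd : (↑S : Set (Fin n)).PairwiseDisjoint
          (fun i => Metric.ball (c i) (r/4)) := by
        intro i _ j _ hij
        exact Set.disjoint_of_subset (hf i).1 (hf j).1 (hdisj i j hij)
      have hunion : ν (⋃ i ∈ S, Metric.ball (c i) (r/4)) =
          ∑ i ∈ S, ν (Metric.ball (c i) (r/4)) :=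
        MeasureTheory.measure_biUnion_finset hpd (fun i _ => measurableSet_ball)
      have hle : ∑ i ∈ S, ν (Metric.ball (c i) (r/4)) ≤ ν (Metric.ball x s) := by
        rw [← hunion]
        exact MeasureTheory.measure_mono (Set.iUnion₂_subset hsub)
      have hle' : ∑ i ∈ S, (ν (Metric.ball (c i) (r/4))).toReal ≤
          (ν (Metric.ball x s)).toReal := by
        rw [← ENNReal.toReal_sum (fun i _ => MeasureTheory.measure_ne_top ν _)]
        exact ENNReal.toReal_mono (MeasureTheory.measure_ne_top ν _) hle
      have hlow : ∀ i ∈ S, (r/4) ^ (d + φ (r/4)) ≤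
          (ν (Metric.ball (c i) (r/4))).toReal := by
        intro i _
        exact (hball (r/4) (by linarith) (by linarith) (c i)).1
      calc (S.card : ℝ) * (r/4) ^ (d + φ (r/4))
          = ∑ _i ∈ S, (r/4) ^ (d + φ (r/4)) := by
            rw [Finset.sum_const, nsmul_eq_mul]
        _ ≤ ∑ i ∈ S, (ν (Metric.ball (c i) (r/4))).toReal := Finset.sum_le_sum hlow
        _ ≤ (ν (Metric.ball x s)).toReal := hle'
        _ ≤ s ^ (d - φ s) := (hball s hs0.le hsr₀ x).2
    -- pure real analysis
    set A : ℝ := 4 ^ (-(3 * d / 2)) * r ^ (d + φ r) with hAdef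
    set B : ℝ := 3 ^ d * R ^ (d - φ (3 * R)) with hBdef
    have hApos : 0 < A := by positivity
    have hAle : A ≤ (r/4) ^ (d + φ (r/4)) := by
      have e1 : (r/4 : ℝ) ^ (d + φ r) = r ^ (d + φ r) * 4 ^ (-(d + φ r)) := by
        rw [Real.div_rpow hr0.le (by norm_num), Real.rpow_neg (by norm_num : (0:ℝ) ≤ 4),
          div_eq_mul_inv]
      have h4 : (4:ℝ) ^ (-(3 * d / 2)) ≤ 4 ^ (-(d + φ r)) :=
        Real.rpow_le_rpow_of_exponent_le (by norm_num) (by linarith)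
      have h2 : A ≤ (r/4) ^ (d + φ r) := by
        rw [e1, hAdef, mul_comm]
        exact mul_le_mul_of_nonneg_left h4 (Real.rpow_nonneg hr0.le _)
      have h3 : (r/4 : ℝ) ^ (d + φ r) ≤ (r/4) ^ (d + φ (r/4)) :=
        Real.rpow_le_rpow_of_exponent_ge (by linarith) (by linarith) (by linarith)
      linarith
    have hBge : s ^ (d - φ s) ≤ B := by
      have h1 : s ^ (d - φ s) ≤ (3 * R) ^ (d - φ s) :=
        Real.rpow_le_rpow hs0.le hs3R (by linarith)
      have h2 : (3 * R) ^ (d - φ s) ≤ (3 * R) ^ (d - φ (3 * R)) :=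
        Real.rpow_le_rpow_of_exponent_ge (by linarith) h3R1.le (by linarith)
      have h3 : (3 * R : ℝ) ^ (d - φ (3 * R)) =
          3 ^ (d - φ (3 * R)) * R ^ (d - φ (3 * R)) :=
        Real.mul_rpow (by norm_num) hR0.le
      have h4 : (3:ℝ) ^ (d - φ (3 * R)) ≤ 3 ^ d :=
        Real.rpow_le_rpow_of_exponent_le (by norm_num) (by linarith)
      have h5 : (3 * R : ℝ) ^ (d - φ (3 * R)) ≤ B := by
        rw [h3, hBdef]
        exact mul_le_mul_of_nonneg_right h4 (Real.rpow_nonneg hR0.le _)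
      linarith
    have hmain : (S.card : ℝ) ≤ B / A := by
      rw [le_div_iff₀ hApos]
      calc (S.card : ℝ) * A ≤ (S.card : ℝ) * (r/4) ^ (d + φ (r/4)) :=
            mul_le_mul_of_nonneg_left hAle (Nat.cast_nonneg _)
        _ ≤ s ^ (d - φ s) := key
        _ ≤ B := hBge
    -- identify B / A with the target
    have hlogr : Real.log r ≠ 0 := by
      have : Real.log r < 0 := Real.log_neg hr0 (by linarith)
      exact ne_of_lt this
    have hrC : r ^ (Real.log C / Real.log r) = C := by
      rw [Real.rpow_def_of_pos hr0, mul_div_cancel₀ _ hlogr, Real.exp_log hCpos]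
    have htarget : R ^ (d + -(φ (3 * R))) * r ^ (-d + (-(φ r) + Real.log C / Real.log r))
        = B / A := by
      have e1 : (-d + (-(φ r) + Real.log C / Real.log r))
          = (-(d + φ r)) + Real.log C / Real.log r := by ring
      have hde : d + -(φ (3 * R)) = d - φ (3 * R) := by ring
      have hxpos : (0:ℝ) < r ^ (d + φ r) := Real.rpow_pos_of_pos hr0 _
      have h44 : (4:ℝ) ^ (-(3 * d / 2)) * (4:ℝ) ^ (3 * d / 2) = 1 := by
        rw [← Real.rpow_add (by norm_num : (0:ℝ) < 4)]
        norm_num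
      have hinv : (r ^ (d + φ r))⁻¹ * r ^ (d + φ r) = 1 := inv_mul_cancel₀ hxpos.ne'
      have e2 : r ^ (-d + (-(φ r) + Real.log C / Real.log r))
          = (r ^ (d + φ r))⁻¹ * C := by
        rw [e1, Real.rpow_add hr0, hrC, Real.rpow_neg hr0.le]
      rw [e2, hde, hBdef, hAdef, hCdef, eq_div_iff (by positivity)]
      linear_combination R ^ (d - φ (3 * R)) * 3 ^ d * 4 ^ (3 * d / 2) *
          4 ^ (-(3 * d / 2)) * hinv + R ^ (d - φ (3 * R)) * 3 ^ d * h44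
    rw [htarget]
    exact hmain
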